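/- Let k > 0, γ > 0, t ≥ 0, and let μ := gaussianReal 0 (γ²·(1 - exp(-k·t))/k). Then for every real S₀, ∫ (cos²(x) + S₀²·sin²(x)) dμ(x) = (1/2)·(1 + S₀²) + (1/2)·(1 - S₀²)·exp(-2·(1 - exp(-k·t))·γ²/k). -/

import Mathlib

open ProbabilityTheory MeasureTheory Real
open scoped NNReal ENNReal

lemma cos_two_gauss_int {v : ℝ≥0} (hv : v ≠ 0) :
    ∫ x : ℝ, Real.cos (2 * x) * Real.exp (-(2*(v:ℝ))⁻¹ * x ^ 2) =
      Real.sqrt (2 * π * v) * Real.exp (-2 * v) := by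
  have hvpos : (0:ℝ) < (v:ℝ) := by positivity
  have hbc : (0:ℝ) < (((2*(v:ℝ))⁻¹ : ℝ) : ℂ).re := by
    simp only [Complex.ofReal_re]; positivity
  have key := fourierIntegral_gaussian hbc (2 : ℂ)
  have hint : Integrable fun x : ℝ => Complex.exp (Complex.I * 2 * x) *
      Complex.exp (-(((2*(v:ℝ))⁻¹ : ℝ) : ℂ) * x ^ 2) := by
    have h := integrable_cexp_quadratic hbc (Complex.I * 2) 0
    refine h.congr (Filter.Eventually.of_forall fun x => ?_)
    simp only [← Complex.exp_add]
    ring_nf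
  have h1 := integral_re (𝕜 := ℂ) hint
  rw [key] at h1
  have hL : (fun x : ℝ => (Complex.exp (Complex.I * 2 * x) *
      Complex.exp (-(((2*(v:ℝ))⁻¹ : ℝ) : ℂ) * x ^ 2)).re) =
      fun x : ℝ => Real.cos (2 * x) * Real.exp (-(2*(v:ℝ))⁻¹ * x ^ 2) := by
    funext x
    rw [← Complex.exp_add, Complex.exp_re]
    have him : (Complex.I * 2 * x + -(((2*(v:ℝ))⁻¹ : ℝ) : ℂ) * x ^ 2).im = 2 * x := by
      simp [← Complex.ofReal_pow]
    have hrr : (Complex.I * 2 * x + -(((2*(v:ℝ))⁻¹ : ℝ) : ℂ) * x ^ 2).re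
        = -(2*(v:ℝ))⁻¹ * x ^ 2 := by
      simp [← Complex.ofReal_pow]
    rw [him, hrr]; ring
  have hR : (((π : ℂ) / (((2*(v:ℝ))⁻¹ : ℝ) : ℂ)) ^ (1/2 : ℂ) *
      Complex.exp (-2 ^ 2 / (4 * (((2*(v:ℝ))⁻¹ : ℝ) : ℂ)))).re
      = Real.sqrt (2 * π * v) * Real.exp (-2 * v) := by
    have e1 : ((π : ℂ) / (((2*(v:ℝ))⁻¹ : ℝ) : ℂ)) = ((2 * π * (v:ℝ) : ℝ) : ℂ) := by
      push_cast
      field_simp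
    have e2 : (-2 ^ 2 / (4 * (((2*(v:ℝ))⁻¹ : ℝ) : ℂ))) = ((-2 * (v:ℝ) : ℝ) : ℂ) := by
      have : (((2*(v:ℝ))⁻¹ : ℝ) : ℂ) ≠ 0 := by
        simp only [ne_eq, Complex.ofReal_eq_zero]
        positivity
      have hv0 : ((v:ℝ):ℂ) ≠ 0 := by exact_mod_cast hvpos.ne'
      push_cast
      field_simp
      ring
    rw [e1, e2, ← Complex.ofReal_exp]
    have e3 : ((2 * π * (v:ℝ) : ℝ) : ℂ) ^ (1/2 : ℂ) = ((Real.sqrt (2 * π * v) : ℝ) : ℂ) := by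
      rw [show (1/2 : ℂ) = ((1/2 : ℝ) : ℂ) by norm_num,
        ← Complex.ofReal_cpow (by positivity), Real.sqrt_eq_rpow]
    rw [e3, ← Complex.ofReal_mul, Complex.ofReal_re]
  simp only [RCLike.re_to_complex] at h1
  rw [hL] at h1
  rw [h1, hR]


lemma integral_cos_two_gaussianReal (v : ℝ≥0) :
    ∫ x : ℝ, Real.cos (2 * x) ∂(gaussianReal 0 v) = Real.exp (-2 * v) := by
  by_cases hv : v = 0
  · simp [hv, gaussianReal_zero_var]
  · have hvpos : (0:ℝ) < (v:ℝ) := by positivity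
    rw [gaussianReal_of_var_ne_zero _ hv, gaussianPDF_def]
    have hd : (fun x => ENNReal.ofReal (gaussianPDFReal 0 v x)) =
        fun x => ((Real.toNNReal (gaussianPDFReal 0 v x) : ℝ≥0) : ℝ≥0∞) := by
      funext x; rfl
    rw [hd, integral_withDensity_eq_integral_smul
      ((measurable_gaussianPDFReal 0 v).real_toNNReal)]
    have : (fun x => (Real.toNNReal (gaussianPDFReal 0 v x)) • Real.cos (2 * x)) =
        fun x => (Real.sqrt (2 * π * v))⁻¹ *
          (Real.cos (2 * x) * Real.exp (-(2*(v:ℝ))⁻¹ * x ^ 2)) := by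
      funext x
      rw [NNReal.smul_def, smul_eq_mul,
        Real.coe_toNNReal _ (gaussianPDFReal_nonneg 0 v x)]
      rw [gaussianPDFReal]
      have : -(x - 0) ^ 2 / (2 * (v:ℝ)) = -(2*(v:ℝ))⁻¹ * x ^ 2 := by
        field_simp
        ring
      rw [this]; ring
    rw [this, integral_const_mul, cos_two_gauss_int hv]
    rw [← mul_assoc, inv_mul_cancel₀ (by positivity), one_mul]

lemma pauli_fid_gaussian (v : ℝ≥0) (S₀ : ℝ) :
    ∫ x, (Real.cos x ^ 2 + S₀ ^ 2 * Real.sin x ^ 2) ∂(gaussianReal 0 v) =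
      (1 / 2) * (1 + S₀ ^ 2) + (1 / 2) * (1 - S₀ ^ 2) * Real.exp (-2 * v) := by
  have hpt : (fun x => Real.cos x ^ 2 + S₀ ^ 2 * Real.sin x ^ 2) =
      fun x => (1 / 2) * (1 + S₀ ^ 2) + (1 / 2) * (1 - S₀ ^ 2) * Real.cos (2 * x) := by
    funext x
    rw [Real.cos_sq, Real.sin_sq_eq_half_sub]
    ring
  have hμ : IsProbabilityMeasure (gaussianReal 0 v) := by infer_instance
  have hic : Integrable (fun x => Real.cos (2 * x)) (gaussianReal 0 v) := by
    refine (integrable_const (1:ℝ)).mono' ?_ ?_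
    · exact (Real.continuous_cos.comp (continuous_const.mul continuous_id)).aestronglyMeasurable
    · exact Filter.Eventually.of_forall fun x => by
        simpa using Real.abs_cos_le_one (2 * x)
  rw [hpt, integral_add (integrable_const _) (hic.const_mul _), integral_const,
    integral_const_mul, integral_cos_two_gaussianReal, probReal_univ]
  simp

theorem pauli_fidelity_mean_OU_stationary (k γ t : ℝ) (hk : 0 < k) (hγ : 0 < γ)
    (ht : 0 ≤ t)
    (μ : Measure ℝ)
    (hμ : μ = gaussianReal 0 (Real.toNNReal (γ ^ 2 * (1 - Real.exp (-k * t)) / k)))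
    (S₀ : ℝ) :
    ∫ x, (Real.cos x ^ 2 + S₀ ^ 2 * Real.sin x ^ 2) ∂μ =
      (1 / 2) * (1 + S₀ ^ 2)
        + (1 / 2) * (1 - S₀ ^ 2) * Real.exp (-2 * (1 - Real.exp (-k * t)) * γ ^ 2 / k) := by
  have hnn : 0 ≤ γ ^ 2 * (1 - Real.exp (-k * t)) / k := by
    have h1 : Real.exp (-k * t) ≤ 1 := by
      rw [Real.exp_le_one_iff]
      nlinarith
    exact div_nonneg (mul_nonneg (sq_nonneg γ) (by linarith)) hk.le
  rw [hμ, pauli_fid_gaussian, Real.coe_toNNReal _ hnn,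
    show -2 * (γ ^ 2 * (1 - Real.exp (-k * t)) / k)
      = -2 * (1 - Real.exp (-k * t)) * γ ^ 2 / k from by ring]
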